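/- Let A and B be bounded linear operators on H such that A and B* are essentially isometric, and assume that ‖Aⁿx‖ → 0 and ‖B*ⁿx‖ → 0 as n → ∞ for every x ∈ H. Then for T ∈ B(H), the sequence {AⁿTBⁿ} converges in operator norm if and only if T admits a decomposition T = T₀ + K where T₀ ∈ B(H) satisfies AT₀B = T₀ and K is a compact operator on H. -/

import Mathlib

set_option maxHeartbeats 1000000

open ContinuousLinearMap Filter Topology

/-- If `Fₙ → 0` strongly with uniform norm bound and `K` is compact, then `‖Fₙ K‖ → 0`. -/
lemma aux_op_tendsto {H : Type*} [NormedAddCommGroup H] [InnerProductSpace ℂ H]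
    [CompleteSpace H] {F : ℕ → H →L[ℂ] H} {M : ℝ}
    (hM : ∀ n, ‖F n‖ ≤ M)
    (hs : ∀ x : H, Tendsto (fun n => ‖(F n) x‖) atTop (𝓝 0))
    {K : H →L[ℂ] H} (hK : IsCompactOperator ⇑K) :
    Tendsto (fun n : ℕ => ‖F n * K‖) atTop (𝓝 0) := by
  have hM0 : (0:ℝ) ≤ M := (norm_nonneg _).trans (hM 0)
  rw [Metric.tendsto_atTop]
  intro ε hε
  set δ : ℝ := ε/3/(M+1) with hδ
  have hδpos : 0 < δ := by positivity
  have hKlin : IsCompactOperator ⇑(K : H →ₗ[ℂ] H) := hK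
  have hScomp : IsCompact (closure (⇑(K : H →ₗ[ℂ] H) '' Metric.closedBall 0 1)) :=
    hKlin.isCompact_closure_image_closedBall (𝕜₁ := ℂ) 1
  obtain ⟨t, htf, hcover⟩ := (Metric.totallyBounded_iff.mp hScomp.totallyBounded) δ hδpos
  have hev : ∀ᶠ n in atTop, ∀ y ∈ t, ‖(F n) y‖ < ε/3 :=
    (Filter.eventually_all_finite htf).mpr fun y _ =>
      (hs y).eventually_lt_const (by positivity)
  obtain ⟨N, hN⟩ := Filter.eventually_atTop.mp hev
  refine ⟨N, fun n hn => ?_⟩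
  have hball : ∀ u : H, ‖u‖ ≤ 1 → ‖(F n) (K u)‖ ≤ 2*ε/3 := by
    intro u hu
    have hmem : K u ∈ closure (⇑(K : H →ₗ[ℂ] H) '' Metric.closedBall 0 1) :=
      subset_closure ⟨u, by simpa [Metric.mem_closedBall, dist_zero_right] using hu, rfl⟩
    obtain ⟨y, hyt, hy⟩ := Set.mem_iUnion₂.mp (hcover hmem)
    have hdist : ‖K u - y‖ ≤ δ := le_of_lt (by rwa [← dist_eq_norm])
    have h1 : ‖(F n) (K u - y)‖ ≤ M * δ :=
      le_trans ((F n).le_opNorm _)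
        (mul_le_mul (hM n) hdist (norm_nonneg _) hM0)
    have hMδ : M * δ ≤ ε / 3 := by
      have h2 : M / (M+1) ≤ 1 := by
        rw [div_le_one (by linarith)]; linarith
      calc M * δ = (ε/3) * (M/(M+1)) := by rw [hδ]; ring
        _ ≤ (ε/3) * 1 := by
            exact mul_le_mul_of_nonneg_left h2 (by positivity)
        _ = ε/3 := mul_one _
    have heq : (F n) (K u) = (F n) (K u - y) + (F n) y := by
      rw [map_sub]; abel
    calc ‖(F n) (K u)‖ ≤ ‖(F n) (K u - y)‖ + ‖(F n) y‖ := by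
          rw [heq]; exact norm_add_le _ _
      _ ≤ ε/3 + ε/3 := add_le_add (h1.trans hMδ) (le_of_lt (hN n hn y hyt))
      _ = 2*ε/3 := by ring
  have hop : ‖F n * K‖ ≤ 2*ε/3 := by
    rw [ContinuousLinearMap.mul_def]
    refine ContinuousLinearMap.opNorm_le_bound _ (by positivity) fun x => ?_
    rcases eq_or_ne x 0 with rfl | hx
    · simp
    · have hx0 : 0 < ‖x‖ := norm_pos_iff.mpr hx
      set u : H := ((‖x‖⁻¹ : ℝ) : ℂ) • x with hu
      have hu1 : ‖u‖ = 1 := by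
        rw [hu, norm_smul]
        simp [abs_of_nonneg (inv_nonneg.mpr (norm_nonneg x)), inv_mul_cancel₀ hx0.ne']
      have hxu : ((F n).comp K) x = ((‖x‖ : ℝ) : ℂ) • (((F n).comp K) u) := by
        rw [hu, map_smul, smul_smul, ← Complex.ofReal_mul, mul_inv_cancel₀ hx0.ne']
        simp
      calc ‖((F n).comp K) x‖ = ‖x‖ * ‖((F n).comp K) u‖ := by
            rw [hxu, norm_smul]; simp [abs_of_nonneg (norm_nonneg x)]
        _ ≤ ‖x‖ * (2*ε/3) := by
            exact mul_le_mul_of_nonneg_left (hball u hu1.le) (norm_nonneg x)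
        _ = 2*ε/3 * ‖x‖ := by ring
  rw [Real.dist_eq, sub_zero, abs_of_nonneg (norm_nonneg _)]
  linarith

/-- **Theorem 2.1.** Let `A` and `B*` be essentially isometric operators on a complex
separable infinite-dimensional Hilbert space `H` such that `‖Aⁿx‖ → 0` and `‖B*ⁿx‖ → 0`
for all `x ∈ H`. If `T ∈ B(H)`, then the sequence `{AⁿTBⁿ}` converges in operator norm
if and only if `T = T₀ + K` where `AT₀B = T₀` and `K` is compact. -/
theorem stmt_0 {H : Type*} [NormedAddCommGroup H] [InnerProductSpace ℂ H]
    [CompleteSpace H] [TopologicalSpace.SeparableSpace H]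
    (hinf : ¬ FiniteDimensional ℂ H)
    (A B T : H →L[ℂ] H)
    (hA : IsCompactOperator (⇑((1 : H →L[ℂ] H) - adjoint A * A)))
    (hB : IsCompactOperator (⇑((1 : H →L[ℂ] H) - B * adjoint B)))
    (hAn : ∀ x : H, Tendsto (fun n : ℕ => ‖(A ^ n) x‖) atTop (𝓝 0))
    (hBn : ∀ x : H, Tendsto (fun n : ℕ => ‖((adjoint B) ^ n) x‖) atTop (𝓝 0)) :
    (∃ L : H →L[ℂ] H, Tendsto (fun n : ℕ => A ^ n * T * B ^ n) atTop (𝓝 L)) ↔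
      (∃ T₀ K : H →L[ℂ] H, T = T₀ + K ∧ A * T₀ * B = T₀ ∧ IsCompactOperator ⇑K) := by
  -- uniform bounds from Banach–Steinhaus
  obtain ⟨CA, hCA⟩ : ∃ C, ∀ n : ℕ, ‖A ^ n‖ ≤ C := by
    apply banach_steinhaus (g := fun n : ℕ => A ^ n)
    intro x
    obtain ⟨C, hC⟩ := (hAn x).bddAbove_range
    exact ⟨C, fun n => hC (Set.mem_range_self n)⟩
  obtain ⟨CB, hCB'⟩ : ∃ C, ∀ n : ℕ, ‖(adjoint B) ^ n‖ ≤ C := by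
    apply banach_steinhaus (g := fun n : ℕ => (adjoint B) ^ n)
    intro x
    obtain ⟨C, hC⟩ := (hBn x).bddAbove_range
    exact ⟨C, fun n => hC (Set.mem_range_self n)⟩
  have hnormB : ∀ n : ℕ, ‖B ^ n‖ = ‖(adjoint B) ^ n‖ := fun n => by
    rw [← ContinuousLinearMap.star_eq_adjoint, ← star_pow, norm_star]
  have hnormA : ∀ n : ℕ, ‖(adjoint A) ^ n‖ = ‖A ^ n‖ := fun n => by
    rw [← ContinuousLinearMap.star_eq_adjoint, ← star_pow, norm_star]
  have hCB : ∀ n : ℕ, ‖B ^ n‖ ≤ CB := fun n => (hnormB n) ▸ hCB' n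
  have hCA0 : (0:ℝ) ≤ CA := (norm_nonneg _).trans (hCA 0)
  have hCB0 : (0:ℝ) ≤ CB := (norm_nonneg _).trans (hCB' 0)
  -- compactness of 1 - (A*)ⁿAⁿ
  have hD : ∀ n : ℕ, IsCompactOperator ⇑((1 : H →L[ℂ] H) - (adjoint A) ^ n * A ^ n) := by
    intro n
    induction n with
    | zero =>
      have : ((1 : H →L[ℂ] H) - (adjoint A) ^ 0 * A ^ 0) = 0 := by simp
      rw [this]; exact isCompactOperator_zero
    | succ n ih =>
      have hkey : (1 : H →L[ℂ] H) - (adjoint A) ^ (n+1) * A ^ (n+1)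
          = ((1 : H →L[ℂ] H) - (adjoint A) ^ n * A ^ n)
            + (adjoint A) ^ n * (((1 : H →L[ℂ] H) - adjoint A * A) * A ^ n) := by
        rw [pow_succ (adjoint A) n, pow_succ' A n]; noncomm_ring
      rw [hkey, ContinuousLinearMap.coe_add']
      refine ih.add ?_
      rw [FunLike.coe_mul_eq_comp]
      exact ((hA.comp_clm (A ^ n)).clm_comp ((adjoint A) ^ n))
  -- compactness of 1 - Bⁿ(B*)ⁿ
  have hE : ∀ n : ℕ, IsCompactOperator ⇑((1 : H →L[ℂ] H) - B ^ n * (adjoint B) ^ n) := by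
    intro n
    induction n with
    | zero =>
      have : ((1 : H →L[ℂ] H) - B ^ 0 * (adjoint B) ^ 0) = 0 := by simp
      rw [this]; exact isCompactOperator_zero
    | succ n ih =>
      have hkey : (1 : H →L[ℂ] H) - B ^ (n+1) * (adjoint B) ^ (n+1)
          = ((1 : H →L[ℂ] H) - B ^ n * (adjoint B) ^ n)
            + B ^ n * (((1 : H →L[ℂ] H) - B * adjoint B) * (adjoint B) ^ n) := by
        rw [pow_succ B n, pow_succ' (adjoint B) n]; noncomm_ring
      rw [hkey, ContinuousLinearMap.coe_add']
      refine ih.add ?_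
      rw [FunLike.coe_mul_eq_comp]
      exact ((hB.comp_clm ((adjoint B) ^ n)).clm_comp (B ^ n))
  -- key identity: (A*)ⁿ (Aⁿ S Bⁿ) (B*)ⁿ = S + compact
  have key : ∀ (S : H →L[ℂ] H) (n : ℕ), ∃ C : H →L[ℂ] H, IsCompactOperator ⇑C ∧
      (adjoint A) ^ n * (A ^ n * S * B ^ n) * (adjoint B) ^ n = S + C := by
    intro S n
    set D : H →L[ℂ] H := (1 : H →L[ℂ] H) - (adjoint A) ^ n * A ^ n with hDdef
    set E : H →L[ℂ] H := (1 : H →L[ℂ] H) - B ^ n * (adjoint B) ^ n with hEdef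
    refine ⟨-(D * (S * (B ^ n * (adjoint B) ^ n))) - S * E, ?_, ?_⟩
    · have h1 : IsCompactOperator ⇑(D * (S * (B ^ n * (adjoint B) ^ n))) := by
        rw [FunLike.coe_mul_eq_comp]
        exact (hD n).comp_clm _
      have h2 : IsCompactOperator ⇑(S * E) := by
        rw [FunLike.coe_mul_eq_comp]
        exact (hE n).continuous_comp S.continuous
      rw [ContinuousLinearMap.coe_sub', ContinuousLinearMap.coe_neg']
      exact (h1.neg).sub h2
    · rw [hDdef, hEdef]; noncomm_ring
  constructor
  · -- forward direction
    rintro ⟨L, hL⟩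
    -- A L B = L
    have hALB : A * L * B = L := by
      have h1 : Tendsto (fun n : ℕ => A * (A ^ n * T * B ^ n) * B) atTop (𝓝 (A * L * B)) :=
        (hL.const_mul A).mul_const B
      have h2 : (fun n : ℕ => A * (A ^ n * T * B ^ n) * B)
          = fun n : ℕ => A ^ (n+1) * T * B ^ (n+1) := by
        funext n
        rw [pow_succ' A n, pow_succ B n]; noncomm_ring
      have h3 : Tendsto (fun n : ℕ => A ^ (n+1) * T * B ^ (n+1)) atTop (𝓝 L) :=
        hL.comp (tendsto_add_atTop_nat 1)
      exact tendsto_nhds_unique (h2 ▸ h1) h3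
    have hLn : ∀ n : ℕ, A ^ n * L * B ^ n = L := by
      intro n
      induction n with
      | zero => simp
      | succ n ih =>
        have h : A ^ (n+1) * L * B ^ (n+1) = A ^ n * (A * L * B) * B ^ n := by
          rw [pow_succ A n, pow_succ' B n]; noncomm_ring
        rw [h, hALB, ih]
    choose C₁ hC₁c hC₁e using fun n => key T n
    choose C₂ hC₂c hC₂e using fun n => key L n
    refine ⟨L, T - L, by abel, hALB, ?_⟩
    -- T - L is a norm limit of the compact operators C₂ n - C₁ n
    have hdiff : ∀ n : ℕ, (C₂ n - C₁ n) - (T - L)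
        = -((adjoint A) ^ n * ((A ^ n * T * B ^ n - L)) * (adjoint B) ^ n) := by
      intro n
      have e1 := hC₁e n
      have e2 := hC₂e n
      rw [hLn n] at e2
      have : (adjoint A) ^ n * (A ^ n * T * B ^ n - L) * (adjoint B) ^ n
          = (adjoint A) ^ n * (A ^ n * T * B ^ n) * (adjoint B) ^ n
            - (adjoint A) ^ n * L * (adjoint B) ^ n := by noncomm_ring
      rw [this, e1]
      have e2' : (adjoint A) ^ n * L * (adjoint B) ^ n = L + C₂ n := e2
      rw [e2']
      abel
    have hnorm : Tendsto (fun n : ℕ => ‖(C₂ n - C₁ n) - (T - L)‖) atTop (𝓝 0) := by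
      have hb : ∀ n : ℕ, ‖(C₂ n - C₁ n) - (T - L)‖
          ≤ CA * CB * ‖A ^ n * T * B ^ n - L‖ := by
        intro n
        rw [hdiff n, norm_neg]
        calc ‖(adjoint A) ^ n * (A ^ n * T * B ^ n - L) * (adjoint B) ^ n‖
            ≤ ‖(adjoint A) ^ n * (A ^ n * T * B ^ n - L)‖ * ‖(adjoint B) ^ n‖ :=
              norm_mul_le _ _
          _ ≤ ‖(adjoint A) ^ n‖ * ‖A ^ n * T * B ^ n - L‖ * ‖(adjoint B) ^ n‖ := by
              gcongr
              exact norm_mul_le _ _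
          _ ≤ CA * ‖A ^ n * T * B ^ n - L‖ * CB := by
              have hA' : ‖(adjoint A) ^ n‖ ≤ CA := (hnormA n) ▸ hCA n
              exact mul_le_mul (mul_le_mul hA' le_rfl (norm_nonneg _) hCA0)
                (hCB' n) (norm_nonneg _) (by positivity)
          _ = CA * CB * ‖A ^ n * T * B ^ n - L‖ := by ring
      have hTL : Tendsto (fun n : ℕ => ‖A ^ n * T * B ^ n - L‖) atTop (𝓝 0) :=
        (tendsto_iff_norm_sub_tendsto_zero).mp hL
      have : Tendsto (fun n : ℕ => CA * CB * ‖A ^ n * T * B ^ n - L‖) atTop (𝓝 0) := by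
        simpa using hTL.const_mul (CA * CB)
      exact squeeze_zero (fun n => norm_nonneg _) hb this
    have hlim : Tendsto (fun n : ℕ => C₂ n - C₁ n) atTop (𝓝 (T - L)) :=
      (tendsto_iff_norm_sub_tendsto_zero).mpr hnorm
    exact isCompactOperator_of_tendsto hlim
      (Filter.Eventually.of_forall fun n => by
        rw [ContinuousLinearMap.coe_sub']; exact (hC₂c n).sub (hC₁c n))
  · -- reverse direction
    rintro ⟨T₀, K, rfl, hT₀, hKc⟩
    have hT₀n : ∀ n : ℕ, A ^ n * T₀ * B ^ n = T₀ := by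
      intro n
      induction n with
      | zero => simp
      | succ n ih =>
        have h : A ^ (n+1) * T₀ * B ^ (n+1) = A ^ n * (A * T₀ * B) * B ^ n := by
          rw [pow_succ A n, pow_succ' B n]; noncomm_ring
        rw [h, hT₀, ih]
    refine ⟨T₀, ?_⟩
    have hsplit : ∀ n : ℕ, A ^ n * (T₀ + K) * B ^ n = T₀ + A ^ n * K * B ^ n := by
      intro n
      rw [mul_add, add_mul, hT₀n n]
    have hAKn : Tendsto (fun n : ℕ => ‖A ^ n * K‖) atTop (𝓝 0) :=
      aux_op_tendsto hCA hAn hKc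
    have hAKB : Tendsto (fun n : ℕ => A ^ n * K * B ^ n) atTop (𝓝 0) := by
      rw [tendsto_zero_iff_norm_tendsto_zero]
      have hb : ∀ n : ℕ, ‖A ^ n * K * B ^ n‖ ≤ ‖A ^ n * K‖ * CB := by
        intro n
        calc ‖A ^ n * K * B ^ n‖ ≤ ‖A ^ n * K‖ * ‖B ^ n‖ := norm_mul_le _ _
          _ ≤ ‖A ^ n * K‖ * CB := by gcongr; exact hCB n
      have : Tendsto (fun n : ℕ => ‖A ^ n * K‖ * CB) atTop (𝓝 0) := by
        simpa using hAKn.mul_const CB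
      exact squeeze_zero (fun n => norm_nonneg _) hb this
    have : Tendsto (fun n : ℕ => T₀ + A ^ n * K * B ^ n) atTop (𝓝 (T₀ + 0)) :=
      hAKB.const_add T₀
    rw [add_zero] at this
    exact this.congr fun n => (hsplit n).symm
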